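/- Let G be a 2-connected graph on n vertices with a Hamiltonian path. If G has minimum degree at least k and n ≤ 2k, then G has a Hamiltonian cycle. -/

import Mathlib

open SimpleGraph

/-- `P'` is aligned with `P` (both starting at `x`): shared vertices appear in the
same relative order. -/
def Aligned {V : Type*} [DecidableEq V] {G : SimpleGraph V} {x a b : V}
    (P : G.Walk x a) (P' : G.Walk x b) : Prop :=
  ∀ u v : V, u ∈ P.support → v ∈ P.support → u ∈ P'.support → v ∈ P'.support →
    P.support.idxOf u < P.support.idxOf v →
    P'.support.idxOf u < P'.support.idxOf v

/-- Two paths with common origin `x` are internally disjoint: every common vertex is a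
common endpoint. -/
def IntDisjoint {V : Type*} {G : SimpleGraph V} {x a b : V}
    (P : G.Walk x a) (Q : G.Walk x b) : Prop :=
  ∀ v : V, v ∈ P.support → v ∈ Q.support → (v = x ∨ v = a) ∧ (v = x ∨ v = b)

/-- 2-connected: at least 3 vertices, connected, and no cut vertex. -/
def TwoConnected {V : Type*} [Fintype V] (G : SimpleGraph V) : Prop :=
  3 ≤ Fintype.card V ∧ G.Connected ∧
    ∀ v : V, ((⊤ : G.Subgraph).deleteVerts {v}).coe.Connected

/-- A lollipop: a cycle `C` and a path `P` whose vertex sets meet exactly in the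
vertex `a`, an endpoint of `P` lying on `C`. -/
def IsLollipop {V : Type*} {G : SimpleGraph V} {v a w : V}
    (C : G.Walk v v) (P : G.Walk a w) : Prop :=
  C.IsCycle ∧ P.IsPath ∧ a ∈ C.support ∧ ∀ u ∈ C.support, u ∈ P.support → u = a

/-- Split a walk at a dart. -/
lemma split_at_dart {V : Type*} {G : SimpleGraph V} {x y : V} (P : G.Walk x y) :
    ∀ d : G.Dart, d ∈ P.darts →
      ∃ (Q : G.Walk x d.toProd.1) (R : G.Walk d.toProd.2 y),
        P.support = Q.support ++ R.support := by
  induction P with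
  | nil => simp
  | @cons a b c h p ih =>
    intro d hd
    rw [Walk.darts_cons, List.mem_cons] at hd
    rcases hd with h' | h'
    · subst h'
      exact ⟨Walk.nil, p, by simp⟩
    · obtain ⟨Q, R, hQR⟩ := ih d h'
      exact ⟨Walk.cons h Q, R, by simp [hQR]⟩

/-- A 2-connected graph on `n ≤ 2k` vertices with a Hamiltonian path and minimum degree
at least `k` has a Hamiltonian cycle. -/
theorem stmt_10 {V : Type*} [Fintype V] [DecidableEq V] {G : SimpleGraph V}
    [DecidableRel G.Adj] {k : ℕ} (hG : TwoConnected G)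
    (hpath : ∃ (x y : V) (P : G.Walk x y), P.IsPath ∧ ∀ v : V, v ∈ P.support)
    (hdeg : ∀ v : V, k ≤ G.degree v) (hn : Fintype.card V ≤ 2 * k) :
    ∃ (v : V) (C : G.Walk v v), C.IsCycle ∧ ∀ u : V, u ∈ C.support := by
  classical
  obtain ⟨hcard3, -, -⟩ := hG
  obtain ⟨x, y, P, hP, hPsupp⟩ := hpath
  have hnodup : P.support.Nodup := (Walk.isPath_def P).mp hP
  have hlen : P.support.length = Fintype.card V := by
    have huniv : P.support.toFinset = Finset.univ := by
      ext v; simp [hPsupp]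
    rw [← List.toFinset_card_of_nodup hnodup, huniv, Finset.card_univ]
  have hxy : x ≠ y := by
    intro h
    subst h
    rw [Walk.isPath_iff_eq_nil.mp hP] at hlen
    simp at hlen
    omega
  -- tail and dropLast nodup facts
  have htail_nodup : (P.darts.map (·.snd)).Nodup := by
    rw [Walk.map_snd_darts]; exact hnodup.tail
  have hdrop_nodup : (P.darts.map (·.fst)).Nodup := by
    rw [Walk.map_fst_darts]
    exact hnodup.sublist (List.dropLast_sublist _)
  have hdarts_nodup : P.darts.Nodup := Walk.darts_nodup_of_support_nodup hnodup
  -- the two finsets of darts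
  set S : Finset G.Dart := P.darts.toFinset.filter (fun d => G.Adj x d.snd) with hS
  set T : Finset G.Dart := P.darts.toFinset.filter (fun d => G.Adj y d.fst) with hT
  have hcardS : S.card = G.degree x := by
    rw [SimpleGraph.degree]
    apply Finset.card_nbij (fun d => d.snd)
    · intro d hd
      rw [hS, Finset.mem_coe, Finset.mem_filter] at hd
      simpa using hd.2
    · intro d1 hd1 d2 hd2 hesnd
      simp only [hS, Finset.coe_filter, Set.mem_setOf_eq, List.mem_toFinset] at hd1 hd2
      exact List.inj_on_of_nodup_map htail_nodup hd1.1 hd2.1 hesnd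
    · intro w hw
      simp only [Finset.coe_filter, Set.mem_setOf_eq, Finset.mem_coe,
        SimpleGraph.mem_neighborFinset] at hw
      have hwx : w ≠ x := fun h => G.irrefl (h ▸ hw)
      have hwsupp : w ∈ P.support := hPsupp w
      have : w ∈ P.support.tail := by
        rcases P.support_eq_cons ▸ hwsupp with h | h
        · rw [Walk.support_eq_cons] at hwsupp
          rcases List.mem_cons.mp hwsupp with h' | h'
          · exact absurd h' hwx
          · exact h'
        · rw [Walk.support_eq_cons] at hwsupp
          rcases List.mem_cons.mp hwsupp with h' | h'
          · exact absurd h' hwx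
          · exact h'
      rw [← Walk.map_snd_darts] at this
      obtain ⟨d, hd, hds⟩ := List.mem_map.mp this
      refine ⟨d, ?_, hds⟩
      simp only [hS, Finset.coe_filter, Set.mem_setOf_eq, List.mem_toFinset]
      exact ⟨hd, hds ▸ hw⟩
  have hcardT : T.card = G.degree y := by
    rw [SimpleGraph.degree]
    apply Finset.card_nbij (fun d => d.fst)
    · intro d hd
      rw [hT, Finset.mem_coe, Finset.mem_filter] at hd
      simpa using hd.2
    · intro d1 hd1 d2 hd2 hefst
      simp only [hT, Finset.coe_filter, Set.mem_setOf_eq, List.mem_toFinset] at hd1 hd2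
      exact List.inj_on_of_nodup_map hdrop_nodup hd1.1 hd2.1 hefst
    · intro u hu
      simp only [Finset.coe_filter, Set.mem_setOf_eq, Finset.mem_coe,
        SimpleGraph.mem_neighborFinset] at hu
      have huy : u ≠ y := fun h => G.irrefl (h ▸ hu)
      have husupp : u ∈ P.support := hPsupp u
      have hne : P.support ≠ [] := P.support_ne_nil
      have : u ∈ P.support.dropLast := by
        have hsplit := List.dropLast_append_getLast hne
        rw [P.getLast_support] at hsplit
        rw [← hsplit] at husupp
        rcases List.mem_append.mp husupp with h | h
        · exact h
        · simp at h; exact absurd h huy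
      rw [← Walk.map_fst_darts] at this
      obtain ⟨d, hd, hds⟩ := List.mem_map.mp this
      refine ⟨d, ?_, hds⟩
      simp only [hT, Finset.coe_filter, Set.mem_setOf_eq, List.mem_toFinset]
      exact ⟨hd, hds ▸ hu⟩
  -- pigeonhole
  have hSTsub : S ∪ T ⊆ P.darts.toFinset := by
    intro d hd
    rcases Finset.mem_union.mp hd with h | h
    · exact (Finset.mem_filter.mp h).1
    · exact (Finset.mem_filter.mp h).1
  have hdartslen : P.darts.toFinset.card = Fintype.card V - 1 := by
    rw [List.toFinset_card_of_nodup hdarts_nodup, Walk.length_darts,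
      ← hlen, Walk.length_support]
    omega
  have hinter : (S ∩ T).Nonempty := by
    rw [← Finset.card_pos]
    have h1 : (S ∪ T).card ≤ Fintype.card V - 1 :=
      hdartslen ▸ Finset.card_le_card hSTsub
    have h2 := Finset.card_union_add_card_inter S T
    have h3 : k ≤ G.degree x := hdeg x
    have h4 : k ≤ G.degree y := hdeg y
    omega
  obtain ⟨d, hd⟩ := hinter
  have hdS := Finset.mem_inter.mp hd |>.1
  have hdT := Finset.mem_inter.mp hd |>.2
  rw [hS, Finset.mem_filter] at hdS
  rw [hT, Finset.mem_filter] at hdT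
  obtain ⟨Q, R, hQR⟩ := split_at_dart P d (List.mem_toFinset.mp hdS.1)
  obtain ⟨⟨u, w⟩, huw⟩ := d
  simp only at hQR
  have hxw : G.Adj x w := hdS.2
  have hyu : G.Adj y u := hdT.2
  clear hdS hdT hd hS hT
  -- build the cycle
  have hyR : y ∈ R.support := R.end_mem_support
  have hxQ : x ∈ Q.support := Q.start_mem_support
  have huQ : u ∈ Q.support := Q.end_mem_support
  have hwR : w ∈ R.support := R.start_mem_support
  have hdisj : ∀ v, v ∈ Q.support → v ∈ R.support → False := by
    have := hQR ▸ hnodup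
    intro v h1 h2
    exact (List.disjoint_of_nodup_append this) h1 h2
  refine ⟨x, Walk.cons hxw (R.append (Walk.cons hyu Q.reverse)), ?_, ?_⟩
  · rw [Walk.cons_isCycle_iff]
    constructor
    · rw [Walk.isPath_def, Walk.support_append, Walk.support_cons, List.tail_cons,
        Walk.support_reverse]
      have hperm : (R.support ++ Q.support.reverse).Perm (Q.support ++ R.support) :=
        ((Q.support.reverse_perm).append_left R.support).trans List.perm_append_comm
      exact hperm.nodup_iff.mpr (hQR ▸ hnodup)
    · rw [Walk.edges_append, Walk.edges_cons]
      intro hmem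
      rcases List.mem_append.mp hmem with h | h
      · exact hdisj x hxQ (R.fst_mem_support_of_mem_edges h)
      · rcases List.mem_cons.mp h with h' | h'
        · rw [Sym2.eq_iff] at h'
          rcases h' with ⟨h1, h2⟩ | ⟨h1, h2⟩
          · exact hxy h1
          · -- x = u, w = y : then Q, R are trivial, contradicting card ≥ 3
            have hQRnodup := hQR ▸ hnodup
            have hQnd : Q.support.Nodup := (List.nodup_append.mp hQRnodup).1
            have hRnd : R.support.Nodup := (List.nodup_append.mp hQRnodup).2.1
            subst h1
            subst h2
            have hQnil : Q.support = [x] := by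
              have hp : Q.IsPath := (Walk.isPath_def Q).mpr hQnd
              rw [Walk.isPath_iff_eq_nil.mp hp]; simp
            have hRnil : R.support = [w] := by
              have hp : R.IsPath := (Walk.isPath_def R).mpr hRnd
              rw [Walk.isPath_iff_eq_nil.mp hp]; simp
            rw [hQR, hQnil, hRnil] at hlen
            simp at hlen
            omega
        · rw [Walk.edges_reverse, List.mem_reverse] at h'
          exact hdisj w (Q.snd_mem_support_of_mem_edges h') hwR
  · intro v
    have hv := hPsupp v
    rw [hQR, List.mem_append] at hv
    rw [Walk.support_cons, Walk.support_append, Walk.support_cons, List.tail_cons,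
      Walk.support_reverse]
    rcases hv with h | h
    · simp only [List.mem_cons, List.mem_append, List.mem_reverse]
      tauto
    · simp only [List.mem_cons, List.mem_append, List.mem_reverse]
      tauto
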